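/- Let d ≥ 2 and for t > 0 define I(t) = ∫_t^∞ ∫_r^∞ ∫_0^r ρ^{d²−d−1} (r r')^d ((r² − ρ²)((r')² − ρ²))^{−1/2} · exp(−(κ_d/2)(r^d + (r')^d)) · exp(−(κ_{d−1}/(2d)) r^{d−1} (√(r² − ρ²) + √((r')² − ρ²))) dρ dr' dr. Then, as t → ∞, I(t) = O( t^{d²−2d} e^{−κ_d t^d} ); in particular I(t) = o( t^{d²−d} e^{−κ_d t^d} ). -/

import Mathlib

open MeasureTheory Filter Asymptotics

noncomputable section

/-- `kappa m` is the Lebesgue measure of the unit ball of `ℝ^m`. -/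
def kappa (m : ℕ) : ℝ := Real.pi ^ ((m : ℝ) / 2) / Real.Gamma ((m : ℝ) / 2 + 1)

/-- The triple integral `I(t)` controlling the expected number of pairs of far-off pointy
vertices sharing `d−1` nuclei. -/
def Ifun (d : ℕ) (t : ℝ) : ℝ :=
  ∫ r in Set.Ioi t, ∫ r' in Set.Ioi r, ∫ ρ in Set.Ioo (0 : ℝ) r,
    ρ ^ (d ^ 2 - d - 1) * (r * r') ^ d *
      ((r ^ 2 - ρ ^ 2) * (r' ^ 2 - ρ ^ 2)) ^ (-(1 / 2) : ℝ) *
      Real.exp (-(kappa d / 2) * (r ^ d + r' ^ d)) *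
      Real.exp (-(kappa (d - 1) / (2 * (d : ℝ))) * r ^ (d - 1) *
        (Real.sqrt (r ^ 2 - ρ ^ 2) + Real.sqrt (r' ^ 2 - ρ ^ 2)))

set_option maxHeartbeats 1000000

open Set Topology

lemma kappa_pos (m : ℕ) : 0 < kappa m := by
  unfold kappa
  apply div_pos (Real.rpow_pos_of_pos Real.pi_pos _)
  apply Real.Gamma_pos_of_pos
  positivity


/-- Antitonicity of `x^n * exp(-a x^d)` past a threshold. -/
lemma aux_anti (n d : ℕ) (hd : 1 ≤ d) {a x y : ℝ} (ha : 0 < a) (hx : 1 ≤ x)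
    (hn : (n : ℝ) ≤ a * d * x) (hxy : x ≤ y) :
    y ^ n * Real.exp (-(a * y ^ d)) ≤ x ^ n * Real.exp (-(a * x ^ d)) := by
  have hx0 : (0:ℝ) < x := lt_of_lt_of_le one_pos hx
  set u : ℝ := (y - x) / x with hu
  have hu0 : 0 ≤ u := div_nonneg (by linarith) hx0.le
  have hyx : x * (1 + u) = y := by rw [hu]; field_simp; ring
  have hbern : x ^ d + d * u * x ^ d ≤ y ^ d := by
    have h1 : 1 + (d:ℝ) * u ≤ (1 + u) ^ d := one_add_mul_le_pow (by linarith) d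
    calc x ^ d + d * u * x ^ d = (1 + d * u) * x ^ d := by ring
    _ ≤ (1 + u) ^ d * x ^ d := by
        apply mul_le_mul_of_nonneg_right h1 (by positivity)
    _ = y ^ d := by rw [← mul_pow, mul_comm (1+u) x, hyx]
  have hyn : y ^ n ≤ x ^ n * Real.exp (n * u) := by
    calc y ^ n = x ^ n * (1 + u) ^ n := by rw [← hyx, mul_pow]
    _ ≤ x ^ n * (Real.exp u) ^ n := by
        apply mul_le_mul_of_nonneg_left (pow_le_pow_left₀ (by linarith) (by linarith [Real.add_one_le_exp u]) n) (by positivity)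
    _ = x ^ n * Real.exp (n * u) := by rw [← Real.exp_nat_mul]
  have hcross : (n : ℝ) * u ≤ a * (y ^ d - x ^ d) := by
    have h2 : a * (d * u * x ^ d) ≤ a * (y ^ d - x ^ d) := by
      apply mul_le_mul_of_nonneg_left (by linarith) ha.le
    have hxd : x ≤ x ^ d := le_self_pow₀ hx (by omega)
    have h3 : (n : ℝ) * u ≤ a * d * x * u := mul_le_mul_of_nonneg_right hn hu0
    have h4 : a * d * x * u ≤ a * (d * u * x ^ d) := by
      have := mul_le_mul_of_nonneg_left hxd (by positivity : (0:ℝ) ≤ a * d * u)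
      nlinarith
    linarith
  calc y ^ n * Real.exp (-(a * y ^ d))
      ≤ (x ^ n * Real.exp (n * u)) * Real.exp (-(a * y ^ d)) := by
        apply mul_le_mul_of_nonneg_right hyn (Real.exp_nonneg _)
    _ = x ^ n * Real.exp (n * u - a * y ^ d) := by rw [mul_assoc, ← Real.exp_add, sub_eq_add_neg]
    _ ≤ x ^ n * Real.exp (-(a * x ^ d)) := by
        apply mul_le_mul_of_nonneg_left (Real.exp_le_exp.2 (by linarith)) (by positivity)

/-- FTC lemma A: the singular integral over `Ioo 0 r`. -/
lemma ftcA {r b : ℝ} (hr : 0 < r) (hb : 0 < b) :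
    IntegrableOn (fun ρ => ρ * (r^2 - ρ^2) ^ (-(1/2) : ℝ) *
      Real.exp (-(b * Real.sqrt (r^2 - ρ^2)))) (Ioo 0 r) volume ∧
    (∫ ρ in Ioo (0:ℝ) r, ρ * (r^2 - ρ^2) ^ (-(1/2) : ℝ) *
      Real.exp (-(b * Real.sqrt (r^2 - ρ^2)))) ≤ 1 / b := by
  set f : ℝ → ℝ := fun ρ => ρ * (r^2 - ρ^2) ^ (-(1/2) : ℝ) *
      Real.exp (-(b * Real.sqrt (r^2 - ρ^2))) with hf
  set H : ℝ → ℝ := fun ρ => b⁻¹ * Real.exp (-(b * Real.sqrt (r^2 - ρ^2))) with hH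
  have hcont : ContinuousOn H (Icc 0 r) := by
    apply Continuous.continuousOn
    fun_prop
  have hder : ∀ ρ ∈ Ioo (0:ℝ) r, HasDerivAt H (f ρ) ρ := by
    intro ρ hρ
    have hpos : 0 < r^2 - ρ^2 := by nlinarith [hρ.1, hρ.2]
    have hsq : 0 < Real.sqrt (r^2 - ρ^2) := Real.sqrt_pos.2 hpos
    have h1 : HasDerivAt (fun ρ : ℝ => r^2 - ρ^2) (-(2 * ρ^1)) ρ := by
      simpa using (hasDerivAt_pow 2 ρ).const_sub (r^2)
    have h2 : HasDerivAt (fun ρ : ℝ => Real.sqrt (r^2 - ρ^2))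
        (1 / (2 * Real.sqrt (r^2 - ρ^2)) * (-(2 * ρ^1))) ρ :=
      (Real.hasDerivAt_sqrt hpos.ne').comp ρ h1
    have h3 : HasDerivAt H
        (b⁻¹ * (Real.exp (-(b * Real.sqrt (r^2 - ρ^2))) *
          (-(b * (1 / (2 * Real.sqrt (r^2 - ρ^2)) * (-(2 * ρ^1))))))) ρ :=
      (((h2.const_mul b).neg).exp).const_mul b⁻¹
    convert h3 using 1
    rw [hf]
    beta_reduce
    have hrw : (r^2 - ρ^2) ^ (-(1/2) : ℝ) = (Real.sqrt (r^2 - ρ^2))⁻¹ := by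
      rw [Real.rpow_neg hpos.le, Real.sqrt_eq_rpow]
    rw [hrw]
    field_simp
  have hnn : ∀ ρ ∈ Ioo (0:ℝ) r, 0 ≤ f ρ := by
    intro ρ hρ
    have h1 : (0:ℝ) ≤ (r^2 - ρ^2) ^ (-(1/2) : ℝ) := by
      apply Real.rpow_nonneg; nlinarith [hρ.1, hρ.2]
    have := hρ.1
    positivity
  have hIoc : IntegrableOn f (Ioc 0 r) volume :=
    intervalIntegral.integrableOn_deriv_of_nonneg hcont hder hnn
  have hint : IntegrableOn f (Ioo 0 r) volume := hIoc.mono_set Ioo_subset_Ioc_self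
  refine ⟨hint, ?_⟩
  have hval : (∫ ρ in Ioo (0:ℝ) r, f ρ) = H r - H 0 := by
    rw [← integral_Ioc_eq_integral_Ioo, ← intervalIntegral.integral_of_le hr.le]
    exact intervalIntegral.integral_eq_sub_of_hasDerivAt_of_le hr.le hcont hder
      ((intervalIntegrable_iff_integrableOn_Ioc_of_le hr.le).2 hIoc)
  rw [hval, hH]
  have h0 : Real.sqrt (r^2 - r^2) = 0 := by simp
  have h1 : (0:ℝ) ≤ b⁻¹ * Real.exp (-(b * Real.sqrt (r^2 - 0^2))) := by positivity
  simp only [h0, mul_zero, neg_zero, Real.exp_zero, mul_one]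
  rw [one_div]
  linarith

/-- FTC lemma B: the singular integral over `Ioi r`. -/
lemma ftcB {r b : ℝ} (hr : 0 ≤ r) (hb : 0 < b) :
    IntegrableOn (fun x => x * (x^2 - r^2) ^ (-(1/2) : ℝ) *
      Real.exp (-(b * Real.sqrt (x^2 - r^2)))) (Ioi r) volume ∧
    (∫ x in Ioi r, x * (x^2 - r^2) ^ (-(1/2) : ℝ) *
      Real.exp (-(b * Real.sqrt (x^2 - r^2)))) = 1 / b := by
  set f : ℝ → ℝ := fun x => x * (x^2 - r^2) ^ (-(1/2) : ℝ) *
      Real.exp (-(b * Real.sqrt (x^2 - r^2))) with hf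
  set G : ℝ → ℝ := fun x => -(b⁻¹ * Real.exp (-(b * Real.sqrt (x^2 - r^2)))) with hG
  have hcont : ContinuousWithinAt G (Ici r) r := by
    apply Continuous.continuousWithinAt
    fun_prop
  have hder : ∀ x ∈ Ioi r, HasDerivAt G (f x) x := by
    intro x hx
    have hx' : r < x := hx
    have hpos : 0 < x^2 - r^2 := by nlinarith
    have hsq : 0 < Real.sqrt (x^2 - r^2) := Real.sqrt_pos.2 hpos
    have h1 : HasDerivAt (fun x : ℝ => x^2 - r^2) (2 * x^1) x := by
      simpa using (hasDerivAt_pow 2 x).sub_const (r^2)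
    have h2 : HasDerivAt (fun x : ℝ => Real.sqrt (x^2 - r^2))
        (1 / (2 * Real.sqrt (x^2 - r^2)) * (2 * x^1)) x :=
      (Real.hasDerivAt_sqrt hpos.ne').comp x h1
    have h3 : HasDerivAt G
        (-(b⁻¹ * (Real.exp (-(b * Real.sqrt (x^2 - r^2))) *
          (-(b * (1 / (2 * Real.sqrt (x^2 - r^2)) * (2 * x^1))))))) x :=
      ((((h2.const_mul b).neg).exp).const_mul b⁻¹).neg
    convert h3 using 1
    rw [hf]
    beta_reduce
    have hrw : (x^2 - r^2) ^ (-(1/2) : ℝ) = (Real.sqrt (x^2 - r^2))⁻¹ := by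
      rw [Real.rpow_neg hpos.le, Real.sqrt_eq_rpow]
    rw [hrw]
    field_simp
  have hnn : ∀ x ∈ Ioi r, 0 ≤ f x := by
    intro x hx
    have hx' : r < x := hx
    have hx0 : 0 < x := lt_of_le_of_lt hr hx'
    have h1 : (0:ℝ) ≤ (x^2 - r^2) ^ (-(1/2) : ℝ) := by
      apply Real.rpow_nonneg; nlinarith
    positivity
  have htends : Tendsto G atTop (𝓝 0) := by
    have hsq : Tendsto (fun x : ℝ => Real.sqrt (x^2 - r^2)) atTop atTop := by
      have hcmp : (fun x : ℝ => x - r) ≤ᶠ[atTop] fun x => Real.sqrt (x^2 - r^2) := by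
        filter_upwards [eventually_ge_atTop r] with x hx
        have h1 : (x - r)^2 ≤ x^2 - r^2 := by nlinarith
        calc x - r = Real.sqrt ((x - r)^2) := by
              rw [Real.sqrt_sq (by linarith)]
          _ ≤ Real.sqrt (x^2 - r^2) := Real.sqrt_le_sqrt h1
      exact tendsto_atTop_mono' atTop hcmp
        (tendsto_atTop_add_const_right atTop (-r) tendsto_id)
    have hexp : Tendsto (fun x : ℝ => Real.exp (-(b * Real.sqrt (x^2 - r^2))))
        atTop (𝓝 0) := by
      apply Real.tendsto_exp_atBot.comp
      simpa [neg_mul] using (hsq.const_mul_atTop_of_neg (neg_lt_zero.2 hb) :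
        Tendsto (fun x : ℝ => -b * Real.sqrt (x^2 - r^2)) atTop atBot)
    have h2 := (hexp.const_mul b⁻¹).neg
    simpa only [mul_zero, neg_zero] using h2
  have hval := integral_Ioi_of_hasDerivAt_of_nonneg hcont hder hnn htends
  refine ⟨integrableOn_Ioi_deriv_of_nonneg hcont hder hnn htends, ?_⟩
  rw [hval, hG]
  simp [one_div]

/-- FTC lemma C: `∫_{Ioi t} x^{d-1} e^{-a x^d} dx = exp(-a t^d)/(a d)`. -/
lemma ftcC {t a : ℝ} {d : ℕ} (hd : 1 ≤ d) (ht : 0 ≤ t) (ha : 0 < a) :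
    IntegrableOn (fun x => x ^ (d-1) * Real.exp (-(a * x^d))) (Ioi t) volume ∧
    (∫ x in Ioi t, x ^ (d-1) * Real.exp (-(a * x^d))) = (a * d)⁻¹ * Real.exp (-(a * t^d)) := by
  have hd0 : (d:ℝ) ≠ 0 := Nat.cast_ne_zero.2 (by omega)
  set f : ℝ → ℝ := fun x => x ^ (d-1) * Real.exp (-(a * x^d)) with hf
  set G : ℝ → ℝ := fun x => -((a * d)⁻¹ * Real.exp (-(a * x^d))) with hG
  have hcont : ContinuousWithinAt G (Ici t) t := by
    apply Continuous.continuousWithinAt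
    fun_prop
  have hder : ∀ x ∈ Ioi t, HasDerivAt G (f x) x := by
    intro x _
    have h1 : HasDerivAt (fun x : ℝ => -(a * x^d)) (-(a * ((d:ℝ) * x^(d-1)))) x :=
      (((hasDerivAt_pow d x).const_mul a).neg)
    have h3 : HasDerivAt G
        (-((a * (d:ℝ))⁻¹ * (Real.exp (-(a * x^d)) * (-(a * ((d:ℝ) * x^(d-1))))))) x :=
      ((h1.exp).const_mul ((a*(d:ℝ))⁻¹)).neg
    convert h3 using 1
    beta_reduce
    field_simp
    ring
  have hnn : ∀ x ∈ Ioi t, 0 ≤ f x := by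
    intro x hx
    have hx0 : 0 < x := lt_of_le_of_lt ht hx
    positivity
  have htends : Tendsto G atTop (𝓝 0) := by
    have hexp : Tendsto (fun x : ℝ => Real.exp (-(a * x^d))) atTop (𝓝 0) := by
      apply Real.tendsto_exp_atBot.comp
      simpa [neg_mul] using ((tendsto_pow_atTop (by omega : d ≠ 0)).const_mul_atTop_of_neg
        (neg_lt_zero.2 ha) : Tendsto (fun x : ℝ => -a * x^d) atTop atBot)
    have h2 := (hexp.const_mul ((a*(d:ℝ))⁻¹)).neg
    simpa only [mul_zero, neg_zero] using h2
  have hval := integral_Ioi_of_hasDerivAt_of_nonneg hcont hder hnn htends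
  refine ⟨integrableOn_Ioi_deriv_of_nonneg hcont hder hnn htends, ?_⟩
  rw [hval, hG]
  ring

/-- Step 1: bound for the inner `ρ`-integral. -/
lemma step1 (d : ℕ) (hd : 2 ≤ d) {r r' : ℝ} (hr : 1 ≤ r) (hrr' : r < r') :
    (∫ ρ in Ioo (0:ℝ) r, ρ ^ (d ^ 2 - d - 1) * (r * r') ^ d *
      ((r ^ 2 - ρ ^ 2) * (r' ^ 2 - ρ ^ 2)) ^ (-(1 / 2) : ℝ) *
      Real.exp (-(kappa d / 2) * (r ^ d + r' ^ d)) *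
      Real.exp (-(kappa (d - 1) / (2 * (d : ℝ))) * r ^ (d - 1) *
        (Real.sqrt (r ^ 2 - ρ ^ 2) + Real.sqrt (r' ^ 2 - ρ ^ 2))))
    ≤ (1 / (kappa (d-1) / (2*(d:ℝ)) * r ^ (d-1))) *
      (r ^ (d^2-d-2) * (r*r') ^ d * Real.exp (-(kappa d/2 * r^d)) *
        Real.exp (-(kappa d/2 * r'^d)) *
        ((r'^2 - r^2) ^ (-(1/2):ℝ) *
         Real.exp (-(kappa (d-1)/(2*(d:ℝ)) * r^(d-1) * Real.sqrt (r'^2 - r^2))))) := by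
  obtain ⟨k, hk⟩ : ∃ k, d ^ 2 = 2 * d + k := by
    refine ⟨d^2 - 2*d, ?_⟩
    have h2d : 2*d ≤ d^2 := by
      calc 2*d ≤ d*d := Nat.mul_le_mul_right d hd
        _ = d^2 := (sq d).symm
    omega
  have hr0 : 0 < r := lt_of_lt_of_le one_pos hr
  have hr'0 : 0 < r' := lt_trans hr0 hrr'
  have hdR : (0:ℝ) < (d:ℝ) := by exact_mod_cast Nat.lt_of_lt_of_le two_pos hd
  have hc : 0 < kappa (d-1)/(2*(d:ℝ)) := div_pos (kappa_pos _) (by linarith)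
  set c := kappa (d-1)/(2*(d:ℝ)) with hc_def
  have hb : 0 < c * r ^ (d-1) := mul_pos hc (pow_pos hr0 _)
  set b := c * r ^ (d-1) with hb_def
  obtain ⟨hintA, hvalA⟩ := ftcA hr0 hb
  set C₁ := r ^ (d^2-d-2) * (r*r') ^ d * Real.exp (-(kappa d/2 * r^d)) *
        Real.exp (-(kappa d/2 * r'^d)) *
        ((r'^2 - r^2) ^ (-(1/2):ℝ) *
         Real.exp (-(b * Real.sqrt (r'^2 - r^2)))) with hC1_def
  have hYnn : (0:ℝ) ≤ r'^2 - r^2 := by nlinarith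
  have hC1nn : 0 ≤ C₁ := by
    rw [hC1_def]
    have h1 : (0:ℝ) ≤ (r'^2 - r^2) ^ (-(1/2):ℝ) := Real.rpow_nonneg hYnn _
    have h2 : (0:ℝ) ≤ r ^ (d^2-d-2) := pow_nonneg hr0.le _
    have h3 : (0:ℝ) ≤ (r*r') ^ d := pow_nonneg (by positivity) _
    positivity
  calc (∫ ρ in Ioo (0:ℝ) r, ρ ^ (d ^ 2 - d - 1) * (r * r') ^ d *
      ((r ^ 2 - ρ ^ 2) * (r' ^ 2 - ρ ^ 2)) ^ (-(1 / 2) : ℝ) *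
      Real.exp (-(kappa d / 2) * (r ^ d + r' ^ d)) *
      Real.exp (-(kappa (d - 1) / (2 * (d : ℝ))) * r ^ (d - 1) *
        (Real.sqrt (r ^ 2 - ρ ^ 2) + Real.sqrt (r' ^ 2 - ρ ^ 2))))
      ≤ ∫ ρ in Ioo (0:ℝ) r, C₁ * (ρ * (r^2 - ρ^2) ^ (-(1/2) : ℝ) *
          Real.exp (-(b * Real.sqrt (r^2 - ρ^2)))) := by
        apply integral_mono_of_nonneg
        · filter_upwards [ae_restrict_mem measurableSet_Ioo] with ρ hρ
          have hXnn : (0:ℝ) ≤ (r ^ 2 - ρ ^ 2) * (r' ^ 2 - ρ ^ 2) := by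
            apply mul_nonneg <;> nlinarith [hρ.1, hρ.2]
          have h1 : (0:ℝ) ≤ ((r ^ 2 - ρ ^ 2) * (r' ^ 2 - ρ ^ 2)) ^ (-(1 / 2) : ℝ) :=
            Real.rpow_nonneg hXnn _
          have h2 : (0:ℝ) ≤ ρ ^ (d^2-d-1) := pow_nonneg hρ.1.le _
          have h3 : (0:ℝ) ≤ (r*r') ^ d := pow_nonneg (by positivity) _
          positivity
        · exact hintA.const_mul C₁
        · filter_upwards [ae_restrict_mem measurableSet_Ioo] with ρ hρ
          obtain ⟨hρ0, hρr⟩ := hρ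
          have hX : (0:ℝ) < r^2 - ρ^2 := by nlinarith
          have hX' : (0:ℝ) < r'^2 - ρ^2 := by nlinarith
          have hsplit1 : ((r ^ 2 - ρ ^ 2) * (r' ^ 2 - ρ ^ 2)) ^ (-(1 / 2) : ℝ)
              = (r^2 - ρ^2) ^ (-(1/2):ℝ) * (r'^2 - ρ^2) ^ (-(1/2):ℝ) :=
            Real.mul_rpow hX.le hX'.le
          have hsplit2 : Real.exp (-(kappa d / 2) * (r ^ d + r' ^ d))
              = Real.exp (-(kappa d/2 * r^d)) * Real.exp (-(kappa d/2 * r'^d)) := by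
            rw [← Real.exp_add]; congr 1; ring
          have hsplit3 : Real.exp (-(kappa (d - 1) / (2 * (d : ℝ))) * r ^ (d - 1) *
                (Real.sqrt (r ^ 2 - ρ ^ 2) + Real.sqrt (r' ^ 2 - ρ ^ 2)))
              = Real.exp (-(b * Real.sqrt (r^2 - ρ^2))) *
                Real.exp (-(b * Real.sqrt (r'^2 - ρ^2))) := by
            rw [← Real.exp_add]; congr 1; rw [hb_def, hc_def]; ring
          have k1 : ρ ^ (d^2-d-1) ≤ r ^ (d^2-d-2) * ρ := by
            have e1 : ρ ^ (d^2-d-1) = ρ ^ (d^2-d-2) * ρ := by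
              rw [← pow_succ]; congr 1; rw [hk]; omega
            rw [e1]
            exact mul_le_mul_of_nonneg_right (pow_le_pow_left₀ hρ0.le hρr.le _) hρ0.le
          have k2 : (r'^2 - ρ^2) ^ (-(1/2):ℝ) ≤ (r'^2 - r^2) ^ (-(1/2):ℝ) := by
            apply Real.rpow_le_rpow_of_nonpos (by nlinarith) (by nlinarith) (by norm_num)
          have k3 : Real.exp (-(b * Real.sqrt (r'^2 - ρ^2)))
              ≤ Real.exp (-(b * Real.sqrt (r'^2 - r^2))) := by
            apply Real.exp_le_exp.2
            apply neg_le_neg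
            exact mul_le_mul_of_nonneg_left (Real.sqrt_le_sqrt (by nlinarith)) hb.le
          have hREST : (0:ℝ) ≤ (r*r') ^ d * Real.exp (-(kappa d/2 * r^d)) *
              Real.exp (-(kappa d/2 * r'^d)) * ((r^2 - ρ^2) ^ (-(1/2):ℝ)) *
              Real.exp (-(b * Real.sqrt (r^2 - ρ^2))) := by
            have h1 : (0:ℝ) ≤ (r^2 - ρ^2) ^ (-(1/2):ℝ) := Real.rpow_nonneg hX.le _
            have h3 : (0:ℝ) ≤ (r*r') ^ d := pow_nonneg (by positivity) _
            positivity
          calc ρ ^ (d ^ 2 - d - 1) * (r * r') ^ d *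
              ((r ^ 2 - ρ ^ 2) * (r' ^ 2 - ρ ^ 2)) ^ (-(1 / 2) : ℝ) *
              Real.exp (-(kappa d / 2) * (r ^ d + r' ^ d)) *
              Real.exp (-(kappa (d - 1) / (2 * (d : ℝ))) * r ^ (d - 1) *
                (Real.sqrt (r ^ 2 - ρ ^ 2) + Real.sqrt (r' ^ 2 - ρ ^ 2)))
              = (ρ ^ (d^2-d-1) * ((r'^2 - ρ^2) ^ (-(1/2):ℝ)) *
                  Real.exp (-(b * Real.sqrt (r'^2 - ρ^2)))) *
                ((r*r') ^ d * Real.exp (-(kappa d/2 * r^d)) *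
                  Real.exp (-(kappa d/2 * r'^d)) * ((r^2 - ρ^2) ^ (-(1/2):ℝ)) *
                  Real.exp (-(b * Real.sqrt (r^2 - ρ^2)))) := by
                rw [hsplit1, hsplit2, hsplit3]; ring
            _ ≤ ((r ^ (d^2-d-2) * ρ) * ((r'^2 - r^2) ^ (-(1/2):ℝ)) *
                  Real.exp (-(b * Real.sqrt (r'^2 - r^2)))) *
                ((r*r') ^ d * Real.exp (-(kappa d/2 * r^d)) *
                  Real.exp (-(kappa d/2 * r'^d)) * ((r^2 - ρ^2) ^ (-(1/2):ℝ)) *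
                  Real.exp (-(b * Real.sqrt (r^2 - ρ^2)))) := by
                apply mul_le_mul_of_nonneg_right _ hREST
                apply mul_le_mul (mul_le_mul k1 k2 (Real.rpow_nonneg hX'.le _)
                    (by positivity)) k3 (Real.exp_nonneg _) ?_
                have h1 : (0:ℝ) ≤ (r'^2 - r^2) ^ (-(1/2):ℝ) := Real.rpow_nonneg hYnn _
                positivity
            _ = C₁ * (ρ * (r^2 - ρ^2) ^ (-(1/2) : ℝ) *
                  Real.exp (-(b * Real.sqrt (r^2 - ρ^2)))) := by
                rw [hC1_def]; ring
      _ = C₁ * ∫ ρ in Ioo (0:ℝ) r, ρ * (r^2 - ρ^2) ^ (-(1/2) : ℝ) *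
            Real.exp (-(b * Real.sqrt (r^2 - ρ^2))) := integral_const_mul _ _
      _ ≤ C₁ * (1 / b) := mul_le_mul_of_nonneg_left hvalA hC1nn
      _ = (1 / b) * (r ^ (d^2-d-2) * (r*r') ^ d * Real.exp (-(kappa d/2 * r^d)) *
            Real.exp (-(kappa d/2 * r'^d)) *
            ((r'^2 - r^2) ^ (-(1/2):ℝ) *
             Real.exp (-(b * Real.sqrt (r'^2 - r^2))))) := by
          rw [hC1_def]; ring

/-- Threshold past which our monotonicity estimates hold. -/
def T0 (d : ℕ) : ℝ := 1 + 2 * (d:ℝ) / kappa d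

lemma T0_ge_one (d : ℕ) : 1 ≤ T0 d := by
  have := (kappa_pos d)
  have h : 0 ≤ 2 * (d:ℝ) / kappa d := by positivity
  simp only [T0]; linarith

lemma grow (d : ℕ) (hd : 2 ≤ d) (n : ℕ) (hn : n ≤ d^2) {x : ℝ} (hx : T0 d ≤ x) :
    (n:ℝ) ≤ kappa d / 2 * d * x := by
  have hκ := kappa_pos d
  have hdR : (0:ℝ) < (d:ℝ) := by exact_mod_cast Nat.lt_of_lt_of_le two_pos hd
  have e : kappa d / 2 * d * T0 d = kappa d * d / 2 + (d:ℝ)^2 := by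
    simp only [T0]; field_simp
  calc (n:ℝ) ≤ ((d^2 : ℕ) : ℝ) := by exact_mod_cast hn
    _ = (d:ℝ)^2 := by push_cast; ring
    _ ≤ kappa d / 2 * d * T0 d := by nlinarith
    _ ≤ kappa d / 2 * d * x := by
        apply mul_le_mul_of_nonneg_left hx (by positivity)

lemma inner_nonneg (d : ℕ) {r r' : ℝ} (hr : 0 < r) (hrr' : r ≤ r') :
    0 ≤ ∫ ρ in Ioo (0:ℝ) r, ρ ^ (d ^ 2 - d - 1) * (r * r') ^ d *
      ((r ^ 2 - ρ ^ 2) * (r' ^ 2 - ρ ^ 2)) ^ (-(1 / 2) : ℝ) *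
      Real.exp (-(kappa d / 2) * (r ^ d + r' ^ d)) *
      Real.exp (-(kappa (d - 1) / (2 * (d : ℝ))) * r ^ (d - 1) *
        (Real.sqrt (r ^ 2 - ρ ^ 2) + Real.sqrt (r' ^ 2 - ρ ^ 2))) := by
  apply setIntegral_nonneg measurableSet_Ioo
  intro ρ hρ
  have hr'0 : 0 < r' := lt_of_lt_of_le hr hrr'
  have hXnn : (0:ℝ) ≤ (r ^ 2 - ρ ^ 2) * (r' ^ 2 - ρ ^ 2) := by
    apply mul_nonneg <;> nlinarith [hρ.1, hρ.2]
  have h1 : (0:ℝ) ≤ ((r ^ 2 - ρ ^ 2) * (r' ^ 2 - ρ ^ 2)) ^ (-(1 / 2) : ℝ) :=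
    Real.rpow_nonneg hXnn _
  have h2 : (0:ℝ) ≤ ρ ^ (d^2-d-1) := pow_nonneg hρ.1.le _
  have h3 : (0:ℝ) ≤ (r*r') ^ d := pow_nonneg (by positivity) _
  positivity

/-- Step 2: bound for the double integral over `r'` and `ρ`. -/
lemma step2 (d : ℕ) (hd : 2 ≤ d) {r : ℝ} (hT : T0 d ≤ r) :
    (∫ r' in Ioi r, ∫ ρ in Ioo (0:ℝ) r, ρ ^ (d ^ 2 - d - 1) * (r * r') ^ d *
      ((r ^ 2 - ρ ^ 2) * (r' ^ 2 - ρ ^ 2)) ^ (-(1 / 2) : ℝ) *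
      Real.exp (-(kappa d / 2) * (r ^ d + r' ^ d)) *
      Real.exp (-(kappa (d - 1) / (2 * (d : ℝ))) * r ^ (d - 1) *
        (Real.sqrt (r ^ 2 - ρ ^ 2) + Real.sqrt (r' ^ 2 - ρ ^ 2))))
    ≤ (1 / (kappa (d-1) / (2*(d:ℝ)) * r ^ (d-1)))^2 *
      (r ^ (d^2-d-2) * r ^ d * r ^ (d-1) * Real.exp (-(kappa d/2 * r^d)) *
        Real.exp (-(kappa d/2 * r^d))) := by
  have hr1 : 1 ≤ r := le_trans (T0_ge_one d) hT
  have hr0 : 0 < r := lt_of_lt_of_le one_pos hr1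
  have hdR : (0:ℝ) < (d:ℝ) := by exact_mod_cast Nat.lt_of_lt_of_le two_pos hd
  have hκ := kappa_pos d
  have hc : 0 < kappa (d-1)/(2*(d:ℝ)) := div_pos (kappa_pos _) (by linarith)
  set c := kappa (d-1)/(2*(d:ℝ)) with hc_def
  have hb : 0 < c * r ^ (d-1) := mul_pos hc (pow_pos hr0 _)
  set b := c * r ^ (d-1) with hb_def
  obtain ⟨hintB, hvalB⟩ := ftcB hr0.le hb
  set C₂ := (1/b) * (r ^ (d^2-d-2) * r ^ d * Real.exp (-(kappa d/2 * r^d)) *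
      (r ^ (d-1) * Real.exp (-(kappa d/2 * r^d)))) with hC2_def
  have hC2nn : 0 ≤ C₂ := by
    rw [hC2_def]
    have h2 : (0:ℝ) ≤ r ^ (d^2-d-2) := pow_nonneg hr0.le _
    positivity
  calc (∫ r' in Ioi r, ∫ ρ in Ioo (0:ℝ) r, ρ ^ (d ^ 2 - d - 1) * (r * r') ^ d *
      ((r ^ 2 - ρ ^ 2) * (r' ^ 2 - ρ ^ 2)) ^ (-(1 / 2) : ℝ) *
      Real.exp (-(kappa d / 2) * (r ^ d + r' ^ d)) *
      Real.exp (-(kappa (d - 1) / (2 * (d : ℝ))) * r ^ (d - 1) *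
        (Real.sqrt (r ^ 2 - ρ ^ 2) + Real.sqrt (r' ^ 2 - ρ ^ 2))))
      ≤ ∫ r' in Ioi r, C₂ * (r' * (r'^2 - r^2) ^ (-(1/2) : ℝ) *
          Real.exp (-(b * Real.sqrt (r'^2 - r^2)))) := by
        apply integral_mono_of_nonneg
        · filter_upwards [ae_restrict_mem measurableSet_Ioi] with r' hr'
          exact inner_nonneg d hr0 (le_of_lt hr')
        · exact hintB.const_mul C₂
        · filter_upwards [ae_restrict_mem measurableSet_Ioi] with r' hr'
          have hrr' : r < r' := hr'
          refine le_trans (step1 d hd hr1 hrr') ?_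
          have hYnn : (0:ℝ) ≤ r'^2 - r^2 := by nlinarith
          have hrpnn : (0:ℝ) ≤ (r'^2 - r^2) ^ (-(1/2):ℝ) := Real.rpow_nonneg hYnn _
          -- r'^d = r'^(d-1) * r', and the antitone bound
          have hpow : r' ^ d = r' ^ (d-1) * r' := by
            rw [← pow_succ]; congr 1; omega
          have hanti : r' ^ (d-1) * Real.exp (-(kappa d/2 * r'^d))
              ≤ r ^ (d-1) * Real.exp (-(kappa d/2 * r^d)) := by
            apply aux_anti (d-1) d (by omega) (by linarith) hr1 ?_ hrr'.le
            have : ((d-1 : ℕ):ℝ) ≤ kappa d / 2 * d * r := by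
              apply grow d hd (d-1) ?_ hT
              calc d - 1 ≤ d := Nat.sub_le _ _
                _ ≤ d^2 := by nlinarith [sq_nonneg d]
            linarith [this]
          calc (1 / b) *
              (r ^ (d^2-d-2) * (r*r') ^ d * Real.exp (-(kappa d/2 * r^d)) *
                Real.exp (-(kappa d/2 * r'^d)) *
                ((r'^2 - r^2) ^ (-(1/2):ℝ) *
                 Real.exp (-(b * Real.sqrt (r'^2 - r^2)))))
              = ((1/b) * (r ^ (d^2-d-2) * r ^ d * Real.exp (-(kappa d/2 * r^d))) *
                  (r' * (r'^2 - r^2) ^ (-(1/2):ℝ) *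
                   Real.exp (-(b * Real.sqrt (r'^2 - r^2))))) *
                (r' ^ (d-1) * Real.exp (-(kappa d/2 * r'^d))) := by
                rw [mul_pow, hpow]; ring
            _ ≤ ((1/b) * (r ^ (d^2-d-2) * r ^ d * Real.exp (-(kappa d/2 * r^d))) *
                  (r' * (r'^2 - r^2) ^ (-(1/2):ℝ) *
                   Real.exp (-(b * Real.sqrt (r'^2 - r^2))))) *
                (r ^ (d-1) * Real.exp (-(kappa d/2 * r^d))) := by
                apply mul_le_mul_of_nonneg_left hanti
                have h2 : (0:ℝ) ≤ r ^ (d^2-d-2) := pow_nonneg hr0.le _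
                have h4 : (0:ℝ) ≤ r' := by linarith
                positivity
            _ = C₂ * (r' * (r'^2 - r^2) ^ (-(1/2) : ℝ) *
                  Real.exp (-(b * Real.sqrt (r'^2 - r^2)))) := by
                rw [hC2_def]; ring
      _ = C₂ * ∫ r' in Ioi r, r' * (r'^2 - r^2) ^ (-(1/2) : ℝ) *
            Real.exp (-(b * Real.sqrt (r'^2 - r^2))) := integral_const_mul _ _
      _ = C₂ * (1/b) := by rw [hvalB]
      _ = (1 / b)^2 * (r ^ (d^2-d-2) * r ^ d * r ^ (d-1) *
            Real.exp (-(kappa d/2 * r^d)) * Real.exp (-(kappa d/2 * r^d))) := by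
          rw [hC2_def]; ring

lemma Ifun_nonneg (d : ℕ) {t : ℝ} (ht : 0 ≤ t) : 0 ≤ Ifun d t := by
  unfold Ifun
  apply setIntegral_nonneg measurableSet_Ioi
  intro r hr
  have hr0 : 0 < r := lt_of_le_of_lt ht hr
  apply setIntegral_nonneg measurableSet_Ioi
  intro r' hr'
  exact inner_nonneg d hr0 (le_of_lt hr')

lemma main_bound (d : ℕ) (hd : 2 ≤ d) {t : ℝ} (ht : T0 d ≤ t) :
    Ifun d t ≤ ((2*(d:ℝ)/kappa (d-1))^2 * ((kappa d/2) * d)⁻¹) *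
      (t ^ (d^2-2*d) * Real.exp (-kappa d * t^d)) := by
  obtain ⟨k, hk⟩ : ∃ k, d ^ 2 = 2 * d + k := by
    refine ⟨d^2 - 2*d, ?_⟩
    have h2d : 2*d ≤ d^2 := by
      calc 2*d ≤ d*d := Nat.mul_le_mul_right d hd
        _ = d^2 := (sq d).symm
    omega
  have ht1 : 1 ≤ t := le_trans (T0_ge_one d) ht
  have ht0 : 0 < t := lt_of_lt_of_le one_pos ht1
  have hdR : (0:ℝ) < (d:ℝ) := by exact_mod_cast Nat.lt_of_lt_of_le two_pos hd
  have hκ := kappa_pos d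
  have hc : 0 < kappa (d-1)/(2*(d:ℝ)) := div_pos (kappa_pos _) (by linarith)
  set c := kappa (d-1)/(2*(d:ℝ)) with hc_def
  obtain ⟨hintC, hvalC⟩ := ftcC (show 1 ≤ d by omega) ht0.le (half_pos hκ)
  set Cg := (1/c)^2 * (t ^ (d^2-2*d) * Real.exp (-(kappa d/2 * t^d))) with hCg_def
  have hCgnn : 0 ≤ Cg := by
    rw [hCg_def]
    have h2 : (0:ℝ) ≤ t ^ (d^2-2*d) := pow_nonneg ht0.le _
    positivity
  calc Ifun d t
      ≤ ∫ r in Ioi t, Cg * (r ^ (d-1) * Real.exp (-(kappa d/2 * r^d))) := by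
        unfold Ifun
        apply integral_mono_of_nonneg
        · filter_upwards [ae_restrict_mem measurableSet_Ioi] with r hr
          have hr0 : 0 < r := lt_trans ht0 hr
          apply setIntegral_nonneg measurableSet_Ioi
          intro r' hr'
          exact inner_nonneg d hr0 (le_of_lt hr')
        · exact hintC.const_mul Cg
        · filter_upwards [ae_restrict_mem measurableSet_Ioi] with r hr
          have htr : t < r := hr
          have hr1 : 1 ≤ r := le_trans ht1 htr.le
          have hr0 : 0 < r := lt_of_lt_of_le one_pos hr1
          refine le_trans (step2 d hd (le_trans ht htr.le)) ?_
          have hpows : r ^ (d^2-d-2) * r ^ d * r ^ (d-1)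
              = r ^ (d^2-2*d) * r ^ (d-1) * (r ^ (d-1) * r ^ (d-1)) := by
            simp only [← pow_add]
            congr 1
            rw [hk]; omega
          have hanti : r ^ (d^2-2*d) * Real.exp (-(kappa d/2 * r^d))
              ≤ t ^ (d^2-2*d) * Real.exp (-(kappa d/2 * t^d)) := by
            apply aux_anti (d^2-2*d) d (by omega) (half_pos hκ) ht1 ?_ htr.le
            exact grow d hd (d^2-2*d) (Nat.sub_le _ _) ht
          calc (1 / (c * r ^ (d-1)))^2 *
              (r ^ (d^2-d-2) * r ^ d * r ^ (d-1) * Real.exp (-(kappa d/2 * r^d)) *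
                Real.exp (-(kappa d/2 * r^d)))
              = (1/c)^2 * (r ^ (d^2-2*d) * Real.exp (-(kappa d/2 * r^d))) *
                (r ^ (d-1) * Real.exp (-(kappa d/2 * r^d))) := by
                rw [hpows]
                have hrd : (r:ℝ) ^ (d-1) ≠ 0 := ne_of_gt (pow_pos hr0 _)
                field_simp
            _ ≤ (1/c)^2 * (t ^ (d^2-2*d) * Real.exp (-(kappa d/2 * t^d))) *
                (r ^ (d-1) * Real.exp (-(kappa d/2 * r^d))) := by
                apply mul_le_mul_of_nonneg_right
                  (mul_le_mul_of_nonneg_left hanti (by positivity))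
                have : (0:ℝ) ≤ r ^ (d-1) := pow_nonneg hr0.le _
                positivity
            _ = Cg * (r ^ (d-1) * Real.exp (-(kappa d/2 * r^d))) := by rw [hCg_def]
      _ = Cg * ∫ r in Ioi t, r ^ (d-1) * Real.exp (-(kappa d/2 * r^d)) :=
          integral_const_mul _ _
      _ = Cg * ((kappa d/2 * d)⁻¹ * Real.exp (-(kappa d/2 * t^d))) := by rw [hvalC]
      _ = ((2*(d:ℝ)/kappa (d-1))^2 * ((kappa d/2) * d)⁻¹) *
          (t ^ (d^2-2*d) * Real.exp (-kappa d * t^d)) := by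
          rw [hCg_def]
          have h1 : (1:ℝ)/c = 2*(d:ℝ)/kappa (d-1) := by
            rw [hc_def, one_div_div]
          have h2 : Real.exp (-(kappa d/2 * t^d)) * Real.exp (-(kappa d/2 * t^d))
              = Real.exp (-kappa d * t^d) := by
            rw [← Real.exp_add]; congr 1; ring
          rw [h1]
          calc (2*(d:ℝ)/kappa (d-1))^2 * (t ^ (d^2-2*d) * Real.exp (-(kappa d/2 * t^d))) *
              ((kappa d/2 * d)⁻¹ * Real.exp (-(kappa d/2 * t^d)))
              = (2*(d:ℝ)/kappa (d-1))^2 * ((kappa d/2) * d)⁻¹ * (t ^ (d^2-2*d) *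
                  (Real.exp (-(kappa d/2 * t^d)) * Real.exp (-(kappa d/2 * t^d)))) := by
                ring
            _ = _ := by rw [h2]

/-- As `t → ∞`, `I(t) = O(t^{d²−2d} e^{−κ_d t^d})`; in particular
`I(t) = o(t^{d²−d} e^{−κ_d t^d})`. -/
theorem Ifun_isBigO (d : ℕ) (hd : 2 ≤ d) :
    (Ifun d) =O[atTop] (fun t : ℝ => t ^ (d ^ 2 - 2 * d) * Real.exp (-kappa d * t ^ d)) ∧
      (Ifun d) =o[atTop] (fun t : ℝ => t ^ (d ^ 2 - d) * Real.exp (-kappa d * t ^ d)) := by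
  obtain ⟨k, hk⟩ : ∃ k, d ^ 2 = 2 * d + k := by
    refine ⟨d^2 - 2*d, ?_⟩
    have h2d : 2*d ≤ d^2 := by
      calc 2*d ≤ d*d := Nat.mul_le_mul_right d hd
        _ = d^2 := (sq d).symm
    omega
  have hbig : (Ifun d) =O[atTop]
      (fun t : ℝ => t ^ (d ^ 2 - 2 * d) * Real.exp (-kappa d * t ^ d)) := by
    rw [isBigO_iff]
    refine ⟨(2*(d:ℝ)/kappa (d-1))^2 * ((kappa d/2) * d)⁻¹, ?_⟩
    filter_upwards [eventually_ge_atTop (T0 d)] with t ht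
    have ht1 : 1 ≤ t := le_trans (T0_ge_one d) ht
    have ht0 : (0:ℝ) ≤ t := by linarith
    have h1 := main_bound d hd ht
    have h2 := Ifun_nonneg d ht0
    have h3 : (0:ℝ) ≤ t ^ (d ^ 2 - 2 * d) * Real.exp (-kappa d * t ^ d) :=
      mul_nonneg (pow_nonneg ht0 _) (Real.exp_nonneg _)
    calc ‖Ifun d t‖ = Ifun d t := by rw [Real.norm_eq_abs, abs_of_nonneg h2]
      _ ≤ ((2*(d:ℝ)/kappa (d-1))^2 * ((kappa d/2) * d)⁻¹) *
          (t ^ (d^2-2*d) * Real.exp (-kappa d * t^d)) := h1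
      _ = ((2*(d:ℝ)/kappa (d-1))^2 * ((kappa d/2) * d)⁻¹) *
          ‖t ^ (d^2-2*d) * Real.exp (-kappa d * t^d)‖ := by
          rw [Real.norm_eq_abs, abs_of_nonneg h3]
  refine ⟨hbig, hbig.trans_isLittleO ?_⟩
  have hlt : d^2 - 2*d < d^2 - d := by rw [hk]; omega
  exact (isLittleO_pow_pow_atTop_of_lt hlt).mul_isBigO (isBigO_refl _ _)
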